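/- Suppose Assumption G holds (each u_i is upper semicontinuous, concave, u_i(x⁰_i) finite, and u_i(x + r·g) > u_i(x) whenever u_i(x) > −∞ and r > 0) and Assumption Z holds: for each i, if u_i(x) > u_i(x') for some x' with u_i(x') > −∞, then u_i(x − ε·g) > −∞ for all sufficiently small ε > 0. If there exists a price vector p ∈ ℝ^J with p·g = 1 such that for every i ∈ I, p·w ≥ p·x⁰_i for all w with u_i(w) ≥ u_i(x⁰_i), then the allocation x⁰ = (x⁰_i)_{i∈I} is Pareto efficient. -/

import Mathlib

open scoped BigOperators
open Metric Filter

noncomputable section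

/-- The inner product `p·y = ∑ j, p j * y j`. -/
def dotp {J : Type*} [Fintype J] (p y : EuclideanSpace ℝ J) : ℝ := ∑ j, p j * y j

/-- A function `u : ℝ^J → ℝ ∪ {±∞}` is concave iff its hypograph is convex. -/
def HypoConcave {J : Type*} [Fintype J] (u : EuclideanSpace ℝ J → EReal) : Prop :=
  Convex ℝ {q : EuclideanSpace ℝ J × ℝ | (q.2 : EReal) ≤ u q.1}

/-- Indifference price function `D(x) = sup {r ∈ ℝ : u(x⁰ + x − r·g) ≥ u(x⁰)}`,
the supremum being taken in `ℝ ∪ {±∞}`. -/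
def indiff {J : Type*} [Fintype J] (u : EuclideanSpace ℝ J → EReal)
    (x0 g x : EuclideanSpace ℝ J) : EReal :=
  sSup {e : EReal | ∃ r : ℝ, e = (r : EReal) ∧ u x0 ≤ u (x0 + x - r • g)}

/-- `p` is a supergradient of `D` at `xb`: `D xb` is finite and
`D x ≤ D xb + p·(x − xb)` for all `x`. -/
def IsSupergradient {J : Type*} [Fintype J] (D : EuclideanSpace ℝ J → EReal)
    (p xb : EuclideanSpace ℝ J) : Prop :=
  D xb ≠ ⊥ ∧ D xb ≠ ⊤ ∧ ∀ x, D x ≤ D xb + ((dotp p (x - xb) : ℝ) : EReal)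

/-- Optimal value `v(z)` of the perturbed market clearing problem `(P_z)`. -/
def marketValue {I J : Type*} [Fintype I] [Fintype J]
    (D : I → EuclideanSpace ℝ J → EReal) (z : EuclideanSpace ℝ J) : EReal :=
  sSup {e : EReal | ∃ x : I → EuclideanSpace ℝ J, (∑ i, x i) = z ∧ e = ∑ i, D i (x i)}

/-- Optimal value of problem `(P')`, the total consumer surplus at allocation `w`. -/
def CSval {I J : Type*} [Fintype I] [Fintype J]
    (u : I → EuclideanSpace ℝ J → EReal) (g : EuclideanSpace ℝ J)
    (w : I → EuclideanSpace ℝ J) : EReal :=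
  sSup {e : EReal | ∃ s : ℝ, e = (s : EReal) ∧ ∃ z : I → EuclideanSpace ℝ J,
    (∑ i, z i) + s • g = ∑ i, w i ∧ ∀ i, u i (w i) ≤ u i (z i)}

/-- Recession function `u^∞(y) = inf_{α>0} (u(x⁰ + α·y) − u(x⁰))/α`. -/
def recession {J : Type*} [Fintype J] (u : EuclideanSpace ℝ J → EReal)
    (x0 y : EuclideanSpace ℝ J) : EReal :=
  sInf {e : EReal | ∃ α : ℝ, 0 < α ∧ e = (u (x0 + α • y) - u x0) / (α : EReal)}

/-- Pareto efficiency of an allocation `x` with total endowment `∑ i, x i`. -/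
def ParetoEfficient {I J : Type*} [Fintype I] [Fintype J]
    (u : I → EuclideanSpace ℝ J → EReal) (x : I → EuclideanSpace ℝ J) : Prop :=
  ¬ ∃ x' : I → EuclideanSpace ℝ J, (∑ i, x' i) = (∑ i, x i) ∧
      (∀ i, u i (x i) ≤ u i (x' i)) ∧ ∃ i, u i (x i) < u i (x' i)


lemma dotp_sub' {J : Type*} [Fintype J] (p x y : EuclideanSpace ℝ J) :
    dotp p (x - y) = dotp p x - dotp p y := by
  simp [dotp, mul_sub, Finset.sum_sub_distrib]

lemma dotp_smul' {J : Type*} [Fintype J] (p x : EuclideanSpace ℝ J) (r : ℝ) :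
    dotp p (r • x) = r * dotp p x := by
  simp only [dotp, PiLp.smul_apply, smul_eq_mul]
  rw [Finset.mul_sum]
  exact Finset.sum_congr rfl fun j _ => by ring

lemma dotp_sum' {I J : Type*} [Fintype I] [Fintype J] (p : EuclideanSpace ℝ J)
    (v : I → EuclideanSpace ℝ J) : dotp p (∑ i, v i) = ∑ i, dotp p (v i) := by
  simp only [dotp]
  rw [Finset.sum_comm]
  exact Finset.sum_congr rfl fun j _ => by rw [WithLp.ofLp_sum, Finset.sum_apply, Finset.mul_sum]

/-- Corollary ve, second part: existence of a supporting price
vector implies Pareto efficiency. -/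
theorem supporting_price_implies_pareto
    {I J : Type*} [Fintype I] [Nonempty I] [Fintype J] [Nonempty J]
    (u : I → EuclideanSpace ℝ J → EReal) (g : EuclideanSpace ℝ J)
    (x0 : I → EuclideanSpace ℝ J)
    (husc : ∀ i, UpperSemicontinuous (u i))
    (hconc : ∀ i, HypoConcave (u i))
    (hne_top : ∀ i x, u i x ≠ ⊤)
    (hfin : ∀ i, u i (x0 i) ≠ ⊥)
    (hmono : ∀ i, ∀ x : EuclideanSpace ℝ J, ∀ r : ℝ, u i x ≠ ⊥ → 0 < r →
      u i x < u i (x + r • g))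
    (hZ : ∀ i, ∀ x x' : EuclideanSpace ℝ J, u i x' ≠ ⊥ → u i x' < u i x →
      ∃ ε0 : ℝ, 0 < ε0 ∧ ∀ ε : ℝ, 0 < ε → ε ≤ ε0 → u i (x - ε • g) ≠ ⊥)
    (p : EuclideanSpace ℝ J) (hpg : dotp p g = 1)
    (hsupp : ∀ i, ∀ w : EuclideanSpace ℝ J, u i (x0 i) ≤ u i w →
      dotp p (x0 i) ≤ dotp p w) :
    ParetoEfficient u x0 := by
  rintro ⟨x', hsum, hle, i₀, hlt⟩
  -- names for the finite values
  have hxb : u i₀ (x' i₀) ≠ ⊥ := fun h => (hfin i₀) (le_bot_iff.mp (h ▸ hlt.le))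
  set a : ℝ := (u i₀ (x' i₀)).toReal with ha
  set c : ℝ := (u i₀ (x0 i₀)).toReal with hc
  have hac : u i₀ (x' i₀) = (a : EReal) := (EReal.coe_toReal (hne_top i₀ _) hxb).symm
  have hcc : u i₀ (x0 i₀) = (c : EReal) := (EReal.coe_toReal (hne_top i₀ _) (hfin i₀)).symm
  have hca : c < a := by
    rw [hac, hcc] at hlt; exact_mod_cast hlt
  obtain ⟨ε0, hε0, hZ'⟩ := hZ i₀ (x' i₀) (x0 i₀) (hfin i₀) hlt
  set w : EuclideanSpace ℝ J := x' i₀ - ε0 • g with hw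
  have hwb : u i₀ w ≠ ⊥ := hZ' ε0 hε0 le_rfl
  set b : ℝ := (u i₀ w).toReal with hb
  have hbc : u i₀ w = (b : EReal) := (EReal.coe_toReal (hne_top i₀ _) hwb).symm
  set t : ℝ := min (1/2) ((a - c) / (2 * (|a - b| + 1))) with htdef
  have ht0 : 0 < t := lt_min (by norm_num) (div_pos (by linarith) (by positivity))
  have ht1 : t ≤ 1/2 := min_le_left _ _
  have htb : t ≤ (a - c) / (2 * (|a - b| + 1)) := min_le_right _ _
  have h2 : t * (2 * (|a - b| + 1)) ≤ a - c := by
    rw [le_div_iff₀ (by positivity)] at htb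
    exact htb
  have h3 : t * (a - b) ≤ t * |a - b| := mul_le_mul_of_nonneg_left (le_abs_self _) ht0.le
  have hkey : c < (1 - t) * a + t * b := by nlinarith [abs_nonneg (a - b), ht0, h2, h3]
  -- convexity
  have hmem : ((((1 - t) • (x' i₀) + t • w : EuclideanSpace ℝ J), (1 - t) * a + t * b) : EuclideanSpace ℝ J × ℝ) ∈ {q : EuclideanSpace ℝ J × ℝ | (q.2 : EReal) ≤ u i₀ q.1} := by
    have h1 : ((x' i₀, a) : EuclideanSpace ℝ J × ℝ) ∈ {q : EuclideanSpace ℝ J × ℝ | (q.2 : EReal) ≤ u i₀ q.1} := by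
      simp only [Set.mem_setOf_eq, hac]; exact le_rfl
    have h2' : ((w, b) : EuclideanSpace ℝ J × ℝ) ∈ {q : EuclideanSpace ℝ J × ℝ | (q.2 : EReal) ≤ u i₀ q.1} := by
      simp only [Set.mem_setOf_eq, hbc]; exact le_rfl
    have := hconc i₀ h1 h2' (by linarith : (0:ℝ) ≤ 1 - t) ht0.le (by ring)
    simpa [Prod.smul_mk, smul_eq_mul] using this
  have hvec : (1 - t) • (x' i₀) + t • w = x' i₀ - (t * ε0) • g := by
    rw [hw]; module
  have hub : u i₀ (x0 i₀) ≤ u i₀ (x' i₀ - (t * ε0) • g) := by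
    rw [hcc]
    refine le_trans ?_ (hvec ▸ hmem)
    exact_mod_cast hkey.le
  -- price inequalities
  have hstrict : dotp p (x0 i₀) + t * ε0 ≤ dotp p (x' i₀) := by
    have := hsupp i₀ _ hub
    rw [dotp_sub', dotp_smul', hpg] at this
    linarith
  have hles : ∀ i, dotp p (x0 i) ≤ dotp p (x' i) := fun i => hsupp i _ (hle i)
  have hsum' : ∑ i, dotp p (x' i) = ∑ i, dotp p (x0 i) := by
    rw [← dotp_sum', ← dotp_sum', hsum]
  have hfin' : ∑ i, dotp p (x0 i) < ∑ i, dotp p (x' i) := by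
    refine Finset.sum_lt_sum (fun i _ => hles i) ⟨i₀, Finset.mem_univ _, ?_⟩
    nlinarith [mul_pos ht0 hε0]
  linarith [hsum' ▸ hfin']
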